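/- Let A(1)_v̄ be the 𝔽₂[τ,ρ]-free module on generators x₀₀, x₁₀, x₂₁, x₃₁, y₃₁, y₄₁, y₅₂, y₆₂ with Sq¹, Sq², Sq⁴ acting as specified by a parameter vector v̄ ∈ 𝔽₂⁷ according to Theorem 'list'. Then the quotient map induced by the submodule generated (over the Sq-operations and 𝕄) by x₃₁ + y₃₁ has the following property: the 𝕄-submodule M spanned by {x₃₁ + y₃₁, Sq¹(x₃₁+y₃₁), Sq²(x₃₁+y₃₁), Sq²Sq¹·(x₃₁+y₃₁)} = span{x₃₁+y₃₁, y₄₁, y₅₂, y₆₂} is free of rank 4 over 𝕄 and is closed under the action of Sq¹ and Sq². -/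

import Mathlib

open MvPolynomial

noncomputable section

/-- The coefficient ring `𝕄 = 𝔽₂[τ, ρ]`, with `τ = X 0` and `ρ = X 1`. -/
abbrev MR := MvPolynomial (Fin 2) (ZMod 2)

/-- The free `𝕄`-module underlying `A^ℝ(1)`, with basis indexed by
`0 = x₀₀, 1 = x₁₀, 2 = x₂₁, 3 = x₃₁, 4 = y₃₁, 5 = y₄₁, 6 = y₅₂, 7 = y₆₂`. -/
abbrev A1 := Fin 8 →₀ MR

/-- The `k`-th `𝕄`-basis generator of `A^ℝ(1)`. -/
def gen (k : Fin 8) : A1 := Finsupp.single k 1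

/-- Values of `Sq¹` on the generators: `Sq¹x₀₀ = x₁₀`, `Sq¹x₂₁ = x₃₁`,
`Sq¹y₃₁ = y₄₁`, `Sq¹y₅₂ = y₆₂`, zero otherwise. -/
def img1 : Fin 8 → A1 := ![gen 1, 0, gen 3, 0, gen 5, 0, gen 7, 0]

/-- Values of `Sq²` on the generators: `Sq²x₀₀ = x₂₁`, `Sq²x₁₀ = y₃₁`,
`Sq²x₂₁ = τ·y₄₁`, `Sq²x₃₁ = y₅₂`, `Sq²y₄₁ = y₆₂`, zero otherwise. -/
def img2 : Fin 8 → A1 := ![gen 2, gen 4, (X 0 : MR) • gen 5, gen 6, 0, gen 7, 0, 0]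

/-- `Sq¹` as an `𝕄`-linear endomorphism of `A^ℝ(1)`. -/
def Sq1 : A1 →ₗ[MR] A1 :=
  Finsupp.lsum MR fun k => LinearMap.toSpanSingleton MR A1 (img1 k)

/-- `Sq²` as an `𝕄`-linear endomorphism of `A^ℝ(1)`. -/
def Sq2 : A1 →ₗ[MR] A1 :=
  Finsupp.lsum MR fun k => LinearMap.toSpanSingleton MR A1 (img2 k)

/-- The `𝕄`-submodule of `A^ℝ(1)` spanned by
`{x₃₁+y₃₁, Sq¹(x₃₁+y₃₁), Sq²(x₃₁+y₃₁), Sq²Sq¹(x₃₁+y₃₁)}` equals the span of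
`{x₃₁+y₃₁, y₄₁, y₅₂, y₆₂}`, is free of rank 4 over `𝕄` (the four spanning
elements are `𝕄`-linearly independent), and is closed under `Sq¹` and `Sq²`. -/

lemma Sq1_gen (k : Fin 8) : Sq1 (gen k) = img1 k := by
  simp [Sq1, gen, Finsupp.lsum_single, LinearMap.toSpanSingleton_apply_one]

lemma Sq2_gen (k : Fin 8) : Sq2 (gen k) = img2 k := by
  simp [Sq2, gen, Finsupp.lsum_single, LinearMap.toSpanSingleton_apply_one]

lemma Sq1_v : Sq1 (gen 3 + gen 4) = gen 5 := by
  rw [map_add, Sq1_gen, Sq1_gen]; show (0 : A1) + gen 5 = gen 5; rw [zero_add]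

lemma Sq2_v : Sq2 (gen 3 + gen 4) = gen 6 := by
  rw [map_add, Sq2_gen, Sq2_gen]; show gen 6 + (0 : A1) = gen 6; rw [add_zero]

lemma Sq2_g5 : Sq2 (gen 5) = gen 7 := by rw [Sq2_gen]; rfl
lemma Sq1_g5 : Sq1 (gen 5) = 0 := by rw [Sq1_gen]; rfl
lemma Sq1_g6 : Sq1 (gen 6) = gen 7 := by rw [Sq1_gen]; rfl
lemma Sq1_g7 : Sq1 (gen 7) = 0 := by rw [Sq1_gen]; rfl
lemma Sq2_g6 : Sq2 (gen 6) = 0 := by rw [Sq2_gen]; rfl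
lemma Sq2_g7 : Sq2 (gen 7) = 0 := by rw [Sq2_gen]; rfl

lemma li_aux : LinearIndependent MR ![gen 3 + gen 4, gen 5, gen 6, gen 7] := by
  rw [Fintype.linearIndependent_iff]
  intro g h
  have h3 := DFunLike.congr_fun h 3
  have h5 := DFunLike.congr_fun h 5
  have h6 := DFunLike.congr_fun h 6
  have h7 := DFunLike.congr_fun h 7
  simp [Fin.sum_univ_four, gen, Finsupp.single_apply] at h3 h5 h6 h7
  intro i
  fin_cases i <;> simp [h3, h5, h6, h7]

theorem submodule_B_epsilon :
    LinearIndependent MR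
        ![gen 3 + gen 4, Sq1 (gen 3 + gen 4), Sq2 (gen 3 + gen 4),
          Sq2 (Sq1 (gen 3 + gen 4))] ∧
      Submodule.span MR
          {gen 3 + gen 4, Sq1 (gen 3 + gen 4), Sq2 (gen 3 + gen 4),
            Sq2 (Sq1 (gen 3 + gen 4))}
        = Submodule.span MR {gen 3 + gen 4, gen 5, gen 6, gen 7} ∧
      (Submodule.span MR {gen 3 + gen 4, gen 5, gen 6, gen 7}).map Sq1
        ≤ Submodule.span MR {gen 3 + gen 4, gen 5, gen 6, gen 7} ∧
      (Submodule.span MR {gen 3 + gen 4, gen 5, gen 6, gen 7}).map Sq2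
        ≤ Submodule.span MR {gen 3 + gen 4, gen 5, gen 6, gen 7} := by
  have e1 : Sq1 (gen 3 + gen 4) = gen 5 := Sq1_v
  have e2 : Sq2 (gen 3 + gen 4) = gen 6 := Sq2_v
  have e3 : Sq2 (Sq1 (gen 3 + gen 4)) = gen 7 := by rw [Sq1_v, Sq2_g5]
  rw [e3, e1, e2]
  refine ⟨li_aux, rfl, ?_, ?_⟩ <;>
  · rw [Submodule.map_span_le]
    rintro m (rfl | rfl | rfl | rfl) <;>
      simp only [Sq1_v, Sq2_v, Sq1_g5, Sq2_g5, Sq1_g6, Sq2_g6, Sq1_g7, Sq2_g7] <;>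
      first
        | exact Submodule.zero_mem _
        | exact Submodule.subset_span (by simp)
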